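/- Let (y_n) be the real sequence satisfying y_n = α_{m-1} y_{n-1} + ... + α₀ y_{n-m} for n ≥ m, where the α_i are nonnegative, sum to 1, and the characteristic polynomial x^m - ∑ αᵢ xⁱ has 1 as a simple root with all other complex roots of modulus < 1. Then y_n converges to (∑_{k=0}^{m-1} a_k y_k)/(∑_{k=0}^{m-1} a_k), where a_k = ∑_{i=0}^k αᵢ. -/

import Mathlib

open Polynomial Filter Finset

-- telescoping key lemma
lemma keyTele {R : Type*} [CommRing R] (m : ℕ) (α : ℕ → R) (a : ℕ → R)
    (ha : ∀ k, a k = ∑ i ∈ Finset.range (k + 1), α i)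
    (hsum : ∑ i ∈ Finset.range m, α i = 1) (g : ℕ → R) :
    ∑ k ∈ Finset.range m, a k * (g (k + 1) - g k)
      = g m - ∑ i ∈ Finset.range m, α i * g i := by
  have swap : ∑ k ∈ Finset.range m, ∑ i ∈ Finset.range (k+1), α i * (g (k+1) - g k)
      = ∑ i ∈ Finset.range m, ∑ k ∈ Finset.Ico i m, α i * (g (k+1) - g k) := by
    simpa [Nat.Ico_zero_eq_range] using
      (Finset.sum_Ico_Ico_comm 0 m (fun i k => α i * (g (k+1) - g k))).symm
  calc ∑ k ∈ Finset.range m, a k * (g (k + 1) - g k)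
      = ∑ k ∈ Finset.range m, ∑ i ∈ Finset.range (k+1), α i * (g (k+1) - g k) := by
        simp [ha, Finset.sum_mul]
    _ = ∑ i ∈ Finset.range m, ∑ k ∈ Finset.Ico i m, α i * (g (k+1) - g k) := swap
    _ = ∑ i ∈ Finset.range m, α i * (g m - g i) := by
        refine Finset.sum_congr rfl fun i hi => ?_
        rw [← Finset.mul_sum]
        congr 1
        have : ∑ k ∈ Finset.Ico i m, (g (k+1) - g k) = g m - g i := by
          rw [Finset.sum_Ico_eq_sub _ (Finset.mem_range.mp hi).le,
            Finset.sum_range_sub, Finset.sum_range_sub]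
          abel
        exact this
    _ = g m - ∑ i ∈ Finset.range m, α i * g i := by
        simp [mul_sub, Finset.sum_sub_distrib, ← Finset.sum_mul, hsum]


lemma lemA (r : ℂ) (hr : ‖r‖ < 1) (e : ℕ → ℂ)
    (hf : Tendsto (fun n => e (n + 1) - r * e n) atTop (nhds 0)) :
    Tendsto e atTop (nhds 0) := by
  set f : ℕ → ℂ := fun n => e (n + 1) - r * e n with hfdef
  have hrn : (0:ℝ) ≤ ‖r‖ := norm_nonneg r
  have h1r : 0 < 1 - ‖r‖ := by linarith
  rw [NormedAddCommGroup.tendsto_nhds_zero]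
  intro ε hε
  have hδ : 0 < ε * (1 - ‖r‖) / 2 := by positivity
  rw [NormedAddCommGroup.tendsto_nhds_zero] at hf
  obtain ⟨N, hN⟩ := (hf _ hδ).exists_forall_of_atTop
  -- bound : ∀ j, ‖e (N + j)‖ ≤ ‖r‖^j * ‖e N‖ + (ε * (1 - ‖r‖)/2) * ∑ i < j, ‖r‖^i
  have bound : ∀ j, ‖e (N + j)‖ ≤ ‖r‖^j * ‖e N‖ + (ε * (1 - ‖r‖)/2) * ∑ i ∈ Finset.range j, ‖r‖^i := by
    intro j
    induction j with
    | zero => simp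
    | succ j ih =>
        have he : e (N + j + 1) = r * e (N + j) + f (N + j) := by simp [hfdef]
        have : ‖e (N + (j+1))‖ ≤ ‖r‖ * ‖e (N + j)‖ + ‖f (N + j)‖ := by
          have : N + (j + 1) = N + j + 1 := by ring
          rw [this, he]
          calc ‖r * e (N+j) + f (N+j)‖ ≤ ‖r * e (N+j)‖ + ‖f (N+j)‖ := norm_add_le _ _
            _ = ‖r‖ * ‖e (N+j)‖ + ‖f (N+j)‖ := by rw [norm_mul]
        have hfb : ‖f (N + j)‖ ≤ ε * (1 - ‖r‖)/2 := le_of_lt (hN (N + j) (by omega))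
        calc ‖e (N + (j+1))‖ ≤ ‖r‖ * ‖e (N + j)‖ + ‖f (N + j)‖ := this
          _ ≤ ‖r‖ * (‖r‖^j * ‖e N‖ + (ε * (1 - ‖r‖)/2) * ∑ i ∈ Finset.range j, ‖r‖^i) + ε * (1 - ‖r‖)/2 := by
              have := mul_le_mul_of_nonneg_left ih hrn
              linarith
          _ = ‖r‖^(j+1) * ‖e N‖ + (ε * (1 - ‖r‖)/2) * (1 + ‖r‖ * ∑ i ∈ Finset.range j, ‖r‖^i) := by ring
          _ = ‖r‖^(j+1) * ‖e N‖ + (ε * (1 - ‖r‖)/2) * ∑ i ∈ Finset.range (j+1), ‖r‖^i := by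
              rw [Finset.sum_range_succ', pow_zero]
              simp only [pow_succ']
              rw [← Finset.mul_sum]
              ring
    -- geom sum bound
  have geomb : ∀ j : ℕ, (∑ i ∈ Finset.range j, ‖r‖^i) ≤ 1 / (1 - ‖r‖) := by
    intro j
    have hne1 : ‖r‖ ≠ 1 := by intro h; rw [h] at hr; simp at hr
    rw [geom_sum_eq hne1]
    have heq : (‖r‖^j - 1)/(‖r‖-1) = (1 - ‖r‖^j)/(1-‖r‖) := by
      rw [← neg_div_neg_eq]; ring_nf
    rw [heq]
    gcongr
    nlinarith [pow_nonneg hrn j]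
  have bound2 : ∀ j, ‖e (N + j)‖ ≤ ‖r‖^j * ‖e N‖ + ε/2 := by
    intro j
    refine (bound j).trans ?_
    have := geomb j
    have h2 : (ε * (1 - ‖r‖)/2) * (∑ i ∈ Finset.range j, ‖r‖^i) ≤ (ε * (1 - ‖r‖)/2) * (1/(1-‖r‖)) :=
      mul_le_mul_of_nonneg_left this (by positivity)
    have hne : (1:ℝ) - ‖r‖ ≠ 0 := ne_of_gt h1r
    have h3 : (ε * (1 - ‖r‖)/2) * (1/(1-‖r‖)) = ε/2 := by
      rw [div_mul_div_comm, mul_one, mul_comm (2:ℝ) (1-‖r‖), mul_comm ε (1-‖r‖),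
        mul_div_mul_left _ _ hne]
    linarith
  -- ‖r‖^j * ‖e N‖ → 0
  have htend : Tendsto (fun j => ‖r‖^j * ‖e N‖) atTop (nhds 0) := by
    simpa using (tendsto_pow_atTop_nhds_zero_of_lt_one hrn hr).mul_const ‖e N‖
  obtain ⟨M, hM⟩ := (Metric.tendsto_atTop.mp htend (ε/2) (by positivity) )
  rw [eventually_atTop]
  refine ⟨N + M, fun n hn => ?_⟩
  have : n = N + (n - N) := by omega
  rw [this]
  have hj : M ≤ n - N := by omega
  have := hM (n - N) hj
  rw [Real.dist_eq, sub_zero] at this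
  have habs : ‖r‖^(n-N) * ‖e N‖ < ε/2 := lt_of_abs_lt this
  have := bound2 (n - N)
  linarith



def shiftE : Module.End ℂ (ℕ → ℂ) where
  toFun e := fun n => e (n + 1)
  map_add' _ _ := rfl
  map_smul' _ _ := rfl

lemma shiftE_pow (k : ℕ) (e : ℕ → ℂ) (n : ℕ) : ((shiftE ^ k) e) n = e (n + k) := by
  induction k generalizing e n with
  | zero => rfl
  | succ k ih =>
      rw [pow_succ, Module.End.mul_apply]
      rw [ih]
      rfl

lemma aeval_X_sub_C (r : ℂ) (e : ℕ → ℂ) :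
    (Polynomial.aeval shiftE (X - C r)) e = fun n => e (n + 1) - r * e n := by
  funext n
  simp [shiftE]

lemma lemB (M : Multiset ℂ) (hM : ∀ r ∈ M, ‖r‖ < 1) (e : ℕ → ℂ)
    (h : Tendsto ((Polynomial.aeval shiftE (M.map (fun r => X - C r)).prod) e) atTop (nhds 0)) :
    Tendsto e atTop (nhds 0) := by
  induction M using Multiset.induction_on generalizing e with
  | empty => simpa using h
  | cons r M ih =>
      have hr : ‖r‖ < 1 := hM r (Multiset.mem_cons_self r M)
      have hM' : ∀ s ∈ M, ‖s‖ < 1 := fun s hs => hM s (Multiset.mem_cons_of_mem hs)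
      refine lemA r hr e ?_
      rw [← aeval_X_sub_C]
      refine ih hM' _ ?_
      have : (Polynomial.aeval shiftE ((M.map (fun s => X - C s)).prod))
          ((Polynomial.aeval shiftE (X - C r)) e)
          = (Polynomial.aeval shiftE (((r ::ₘ M).map (fun s => X - C s)).prod)) e := by
        rw [Multiset.map_cons, Multiset.prod_cons, mul_comm, map_mul, Module.End.mul_apply]
      rw [this]
      exact h



lemma aeval_sum_form (m : ℕ) (c : ℕ → ℂ) (e : ℕ → ℂ) (n : ℕ) :
    (Polynomial.aeval shiftE (∑ k ∈ Finset.range m, C (c k) * X ^ k)) e n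
      = ∑ k ∈ Finset.range m, c k * e (n + k) := by
  rw [map_sum, LinearMap.sum_apply, Finset.sum_apply]
  refine Finset.sum_congr rfl fun k hk => ?_
  rw [map_mul, aeval_C, map_pow, aeval_X, Module.End.mul_apply,
    Module.algebraMap_end_apply, Pi.smul_apply, smul_eq_mul, shiftE_pow]










theorem stmt_7 (m : ℕ) (hm : 2 ≤ m) (α : ℕ → ℝ)
    (hα : ∀ i, i < m → 0 ≤ α i) (hsum : ∑ i ∈ Finset.range m, α i = 1)
    (hsimple : (X ^ m - ∑ i ∈ Finset.range m, C (α i) * X ^ i : Polynomial ℝ).rootMultiplicity 1 = 1)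
    (hmod : ∀ z : ℂ,
      ((X ^ m - ∑ i ∈ Finset.range m, C (α i) * X ^ i : Polynomial ℝ).map
        (algebraMap ℝ ℂ)).IsRoot z → z ≠ 1 → ‖z‖ < 1)
    (y : ℕ → ℝ)
    (hrec : ∀ n, m ≤ n → y n = ∑ i ∈ Finset.range m, α i * y (n - m + i))
    (a : ℕ → ℝ) (ha : ∀ k, a k = ∑ i ∈ Finset.range (k + 1), α i) :
    Tendsto y atTop
      (nhds ((∑ k ∈ Finset.range m, a k * y k) / (∑ k ∈ Finset.range m, a k))) := by
  set A : ℝ := ∑ k ∈ Finset.range m, a k with hA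
  set L : ℝ := (∑ k ∈ Finset.range m, a k * y k) / A with hL
  -- positivity of A
  have hak : ∀ k, k < m → 0 ≤ a k := by
    intro k hk
    rw [ha]
    exact Finset.sum_nonneg fun i hi => hα i (lt_of_lt_of_le (Finset.mem_range.mp hi) hk)
  have ham : a (m - 1) = 1 := by
    rw [ha]
    have : m - 1 + 1 = m := by omega
    rw [this, hsum]
  have hA1 : 1 ≤ A := by
    rw [hA, ← ham]
    exact Finset.single_le_sum (fun k hk => hak k (Finset.mem_range.mp hk))
      (Finset.mem_range.mpr (by omega))
  have hA0 : A ≠ 0 := by linarith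
  -- invariance
  have hstep : ∀ n, ∑ k ∈ Finset.range m, a k * y (n + 1 + k)
      = ∑ k ∈ Finset.range m, a k * y (n + k) := by
    intro n
    have hkey := keyTele m α a ha hsum (fun k => y (n + k))
    have hy : y (n + m) = ∑ i ∈ Finset.range m, α i * y (n + i) := by
      have h1 := hrec (n + m) (by omega)
      have h2 : n + m - m = n := by omega
      rw [h2] at h1
      exact h1
    rw [hy] at hkey
    have expand : ∑ k ∈ Finset.range m, a k * (y (n + (k + 1)) - y (n + k))
        = (∑ k ∈ Finset.range m, a k * y (n + 1 + k))
          - ∑ k ∈ Finset.range m, a k * y (n + k) := by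
      rw [← Finset.sum_sub_distrib]
      refine Finset.sum_congr rfl fun k hk => ?_
      have : n + (k + 1) = n + 1 + k := by omega
      rw [this]; ring
    rw [expand] at hkey
    linarith
  have hinv : ∀ n, ∑ k ∈ Finset.range m, a k * y (n + k)
      = ∑ k ∈ Finset.range m, a k * y k := by
    intro n
    induction n with
    | zero => simp
    | succ n ih => rw [← ih, ← hstep n]
  -- the polynomial Q over ℂ
  set c : ℕ → ℂ := fun k => ((a k : ℝ) : ℂ) with hc
  set Q : Polynomial ℂ := ∑ k ∈ Finset.range m, C (c k) * X ^ k with hQ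
  have hcm : c (m - 1) = 1 := by rw [hc]; simp [ham]
  have hQ' : Q = X ^ (m - 1) + ∑ k ∈ Finset.range (m - 1), C (c k) * X ^ k := by
    rw [hQ]
    have : m = (m - 1) + 1 := by omega
    rw [this, Finset.sum_range_succ, hcm]
    have : m - 1 + 1 - 1 = m - 1 := by omega
    rw [this, Polynomial.C_1, one_mul, add_comm]
  have hQmonic : Q.Monic := by
    rw [hQ']
    apply Polynomial.monic_X_pow_add
    refine lt_of_le_of_lt (Polynomial.degree_sum_le _ _) ?_
    rw [Finset.sup_lt_iff (by exact_mod_cast WithBot.bot_lt_coe (m-1))]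
    intro k hk
    refine lt_of_le_of_lt (Polynomial.degree_C_mul_X_pow_le _ _) ?_
    exact_mod_cast Nat.cast_lt.mpr (Finset.mem_range.mp hk)
  -- roots bound
  have hroots : ∀ r ∈ Q.roots, ‖r‖ < 1 := by
    intro z hz
    have hzr : Q.eval z = 0 := (Polynomial.isRoot_of_mem_roots hz)
    have hev : Q.eval z = ∑ k ∈ Finset.range m, c k * z ^ k := by
      rw [hQ, Polynomial.eval_finset_sum]
      simp
    rw [hev] at hzr
    -- telescoping identity at z
    have hkey := keyTele m (fun i => ((α i : ℝ) : ℂ)) c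
      (fun k => by simp only [hc]; rw [ha]; push_cast; ring)
      (by rw [← Complex.ofReal_one, ← hsum]; push_cast; ring) (fun k => z ^ k)
    have hlhs : ∑ k ∈ Finset.range m, c k * (z ^ (k + 1) - z ^ k)
        = (∑ k ∈ Finset.range m, c k * z ^ k) * (z - 1) := by
      rw [Finset.sum_mul]
      refine Finset.sum_congr rfl fun k hk => ?_
      ring
    rw [hlhs, hzr, zero_mul] at hkey
    -- z is a root of mapped p
    have hproot : ((X ^ m - ∑ i ∈ Finset.range m, C (α i) * X ^ i : Polynomial ℝ).map
        (algebraMap ℝ ℂ)).IsRoot z := by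
      simp only [IsRoot, Polynomial.map_sub, Polynomial.map_pow, Polynomial.map_X,
        Polynomial.map_sum, Polynomial.map_mul, Polynomial.map_C, eval_sub, eval_pow,
        eval_X, eval_finset_sum, eval_mul, eval_C, Complex.coe_algebraMap]
      linear_combination -hkey
    have hz1 : z ≠ 1 := by
      intro h
      rw [h] at hzr
      simp only [one_pow, mul_one] at hzr
      have : ∑ k ∈ Finset.range m, c k = ((A : ℝ) : ℂ) := by
        rw [hA, hc]; push_cast; rfl
      rw [this] at hzr
      exact hA0 (by exact_mod_cast hzr)
    have := hmod z hproot hz1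
    exact this
  -- e and its annihilation
  set e : ℕ → ℂ := fun n => ((y n : ℝ) : ℂ) - ((L : ℝ) : ℂ) with he
  have hQe : (Polynomial.aeval shiftE Q) e = 0 := by
    funext n
    rw [hQ, aeval_sum_form]
    have : ∑ k ∈ Finset.range m, c k * e (n + k)
        = ((∑ k ∈ Finset.range m, a k * y (n + k) : ℝ) : ℂ)
          - ((A : ℝ) : ℂ) * ((L : ℝ) : ℂ) := by
      rw [he, hc, hA]
      push_cast
      rw [Finset.sum_mul, ← Finset.sum_sub_distrib]
      exact Finset.sum_congr rfl fun k _ => by ring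
    rw [this, hinv]
    have : ((A:ℝ):ℂ) * ((L:ℝ):ℂ) = ((∑ k ∈ Finset.range m, a k * y k : ℝ) : ℂ) := by
      have hA0' : ((A:ℝ):ℂ) ≠ 0 := by exact_mod_cast hA0
      rw [hL]
      push_cast
      rw [mul_div_assoc']
      exact mul_div_cancel_left₀ _ hA0'
    rw [this]
    simp
  -- factor Q and conclude e → 0
  have hfac : Q = (Q.roots.map fun r => X - C r).prod :=
    (IsAlgClosed.splits Q).eq_prod_roots_of_monic hQmonic
  have he0 : Tendsto e atTop (nhds 0) := by
    refine lemB Q.roots hroots e ?_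
    rw [← hfac, hQe]
    exact tendsto_const_nhds
  -- conclude
  show Tendsto y atTop (nhds L)
  have h1 : Tendsto (fun n => ((y n : ℝ) : ℂ)) atTop (nhds ((L : ℝ) : ℂ)) := by
    have := he0.add_const ((L : ℝ) : ℂ)
    simpa [he] using this
  have h2 := (Complex.continuous_re.tendsto _).comp h1
  simpa [Function.comp_def] using h2
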